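/- The disemigroup ([X⁺]_ω, ⊢, ⊣) of normal diwords is the free disemigroup on X: for any disemigroup D and any map f : X → D, there is a unique disemigroup homomorphism F : [X⁺]_ω → D with F((x,1)) = f(x) for all x ∈ X. -/

import Mathlib

/-- Normal diwords on X: pairs (u, m) with u a nonempty word on X and 1 ≤ m ≤ |u|. -/
def Diword (X : Type*) : Type _ :=
  {p : List X × ℕ // p.1 ≠ [] ∧ 1 ≤ p.2 ∧ p.2 ≤ p.1.length}

/-- (u,m) ⊢ (v,n) = (uv, |u| + n). -/
def Diword.dL {X : Type*} (a b : Diword X) : Diword X :=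
  ⟨(a.1.1 ++ b.1.1, a.1.1.length + b.1.2), by
    obtain ⟨ha1, _, _⟩ := a.2
    obtain ⟨hb1, hb2, hb3⟩ := b.2
    refine ⟨by simp [ha1], by omega, by simp only [List.length_append]; omega⟩⟩

/-- (u,m) ⊣ (v,n) = (uv, m). -/
def Diword.dR {X : Type*} (a b : Diword X) : Diword X :=
  ⟨(a.1.1 ++ b.1.1, a.1.2), by
    obtain ⟨ha1, ha2, ha3⟩ := a.2
    obtain ⟨hb1, _, _⟩ := b.2
    refine ⟨by simp [ha1], ha2, by simp only [List.length_append]; omega⟩⟩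

/-- The embedding X → [X⁺]_ω, x ↦ (x, 1). -/
def Diword.ofLetter {X : Type*} (x : X) : Diword X :=
  ⟨([x], 1), by simp⟩

/-- A disemigroup: two associative operations satisfying the three dialgebra identities. -/
structure Disemigroup (D : Type*) where
  l : D → D → D
  r : D → D → D
  l_assoc : ∀ a b c : D, l (l a b) c = l a (l b c)
  r_assoc : ∀ a b c : D, r (r a b) c = r a (r b c)
  ax1 : ∀ a b c : D, r a (l b c) = r a (r b c)
  ax2 : ∀ a b c : D, l (r a b) c = l (l a b) c
  ax3 : ∀ a b c : D, l a (r b c) = r (l a b) c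

section Helpers

variable {D : Type*} (S : Disemigroup D)


lemma foldl_l_l : ∀ (t : List D) (a x : D), S.l a (t.foldl S.l x) = t.foldl S.l (S.l a x)
  | [], _, _ => rfl
  | h :: t, a, x => by simp only [List.foldl_cons, foldl_l_l t, S.l_assoc]

lemma foldl_r_r : ∀ (t : List D) (a x : D), S.r a (t.foldl S.r x) = t.foldl S.r (S.r a x)
  | [], _, _ => rfl
  | h :: t, a, x => by simp only [List.foldl_cons, foldl_r_r t, S.r_assoc]

lemma foldl_l_over_r : ∀ (t : List D) (a x : D),
    S.l a (t.foldl S.r x) = t.foldl S.r (S.l a x)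
  | [], _, _ => rfl
  | h :: t, a, x => by
      simp only [List.foldl_cons, foldl_l_over_r t, S.ax3]

lemma congr_l : ∀ (t : List D) {x y : D}, (∀ w, S.l x w = S.l y w) →
    ∀ w, S.l (t.foldl S.l x) w = S.l (t.foldl S.l y) w
  | [], _, _, hxy, w => hxy w
  | h :: t, x, y, hxy, w => by
      simp only [List.foldl_cons]
      exact congr_l t (fun w => by rw [S.l_assoc, S.l_assoc, hxy]) w

lemma congr_r : ∀ (t : List D) {x y : D}, (∀ a, S.r a x = S.r a y) →
    ∀ a, S.r a (t.foldl S.r x) = S.r a (t.foldl S.r y)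
  | [], _, _, hxy, a => hxy a
  | h :: t, x, y, hxy, a => by
      simp only [List.foldl_cons]
      exact congr_r t (fun a => by rw [← S.r_assoc, ← S.r_assoc, hxy]) a

lemma l_foldl_rl : ∀ (t : List D) (x z : D),
    S.l (t.foldl S.r x) z = S.l (t.foldl S.l x) z
  | [], _, _ => rfl
  | h :: t, x, z => by
      simp only [List.foldl_cons]
      rw [l_foldl_rl t]
      exact congr_l S t (fun w => S.ax2 x h w) z

lemma r_foldl_lr : ∀ (t : List D) (x a : D),
    S.r a (t.foldl S.l x) = S.r a (t.foldl S.r x)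
  | [], _, _ => rfl
  | h :: t, x, a => by
      simp only [List.foldl_cons]
      rw [r_foldl_lr t]
      exact (congr_r S t (fun a => (S.ax1 a x h).symm) a).symm


end Helpers

/-- The candidate unique homomorphism. -/
def diEval {X D : Type*} (S : Disemigroup D) (f : X → D) : Diword X → D
  | ⟨([], _), h⟩ => absurd rfl h.1
  | ⟨(x :: t, m), _⟩ =>
      List.foldl S.r (List.foldl S.l (f x) ((t.take (m - 1)).map f)) ((t.drop (m - 1)).map f)


lemma diEval_dL {X D : Type*} (S : Disemigroup D) (f : X → D) (a b : Diword X) :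
    diEval S f (a.dL b) = S.l (diEval S f a) (diEval S f b) := by
  obtain ⟨⟨u, m⟩, ha⟩ := a
  obtain ⟨⟨v, n⟩, hb⟩ := b
  rcases u with _ | ⟨x, t⟩
  · exact absurd rfl ha.1
  rcases v with _ | ⟨y, s⟩
  · exact absurd rfl hb.1
  obtain ⟨-, ham, haM⟩ := ha
  obtain ⟨-, hbm, hbM⟩ := hb
  simp only [List.length_cons] at haM hbM
  show List.foldl S.r (List.foldl S.l (f x)
      ((((t ++ y :: s)).take ((t.length + 1 + n) - 1)).map f))
      ((((t ++ y :: s)).drop ((t.length + 1 + n) - 1)).map f) = _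
  have h1 : (t ++ y :: s).take ((t.length + 1 + n) - 1) = t ++ y :: s.take (n - 1) := by
    rw [List.take_append]
    congr 1
    · rw [List.take_of_length_le (by omega)]
    · have : (t.length + 1 + n) - 1 - t.length = n := by omega
      rw [this]
      cases n with
      | zero => omega
      | succ k => simp
  have h2 : (t ++ y :: s).drop ((t.length + 1 + n) - 1) = s.drop (n - 1) := by
    rw [List.drop_append, List.drop_of_length_le (by omega)]
    have : (t.length + 1 + n) - 1 - t.length = n := by omega
    rw [this, List.nil_append]
    cases n with
    | zero => omega
    | succ k => simp
  rw [h1, h2]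
  show _ = S.l (List.foldl S.r (List.foldl S.l (f x) ((t.take (m-1)).map f)) ((t.drop (m-1)).map f))
    (List.foldl S.r (List.foldl S.l (f y) ((s.take (n-1)).map f)) ((s.drop (n-1)).map f))
  rw [foldl_l_over_r, l_foldl_rl]
  congr 1
  rw [foldl_l_l]
  conv_lhs => rw [← List.take_append_drop (m-1) t]
  simp only [List.map_append, List.map_cons, List.foldl_append, List.foldl_cons]

lemma diEval_dR {X D : Type*} (S : Disemigroup D) (f : X → D) (a b : Diword X) :
    diEval S f (a.dR b) = S.r (diEval S f a) (diEval S f b) := by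
  obtain ⟨⟨u, m⟩, ha⟩ := a
  obtain ⟨⟨v, n⟩, hb⟩ := b
  rcases u with _ | ⟨x, t⟩
  · exact absurd rfl ha.1
  rcases v with _ | ⟨y, s⟩
  · exact absurd rfl hb.1
  obtain ⟨-, ham, haM⟩ := ha
  obtain ⟨-, hbm, hbM⟩ := hb
  simp only [List.length_cons] at haM hbM
  show List.foldl S.r (List.foldl S.l (f x)
      ((((t ++ y :: s)).take (m - 1)).map f))
      ((((t ++ y :: s)).drop (m - 1)).map f) = _
  have h1 : (t ++ y :: s).take (m - 1) = t.take (m - 1) := by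
    exact List.take_append_of_le_length (by omega)
  have h2 : (t ++ y :: s).drop (m - 1) = t.drop (m - 1) ++ y :: s := by
    rw [List.drop_append]
    have : m - 1 - t.length = 0 := by omega
    rw [this, List.drop_zero]
  rw [h1, h2]
  show _ = S.r (List.foldl S.r (List.foldl S.l (f x) ((t.take (m-1)).map f)) ((t.drop (m-1)).map f))
    (List.foldl S.r (List.foldl S.l (f y) ((s.take (n-1)).map f)) ((s.drop (n-1)).map f))
  rw [foldl_r_r, r_foldl_lr, foldl_r_r]
  conv_lhs => rw [← List.take_append_drop (n-1) s]
  simp only [List.map_append, List.map_cons, List.foldl_append, List.foldl_cons]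

lemma diEval_ofLetter {X D : Type*} (S : Disemigroup D) (f : X → D) (x : X) :
    diEval S f (Diword.ofLetter x) = f x := rfl

theorem stmt2 {X D : Type*} (S : Disemigroup D) (f : X → D) :
    ∃! F : Diword X → D,
      (∀ a b : Diword X, F (a.dL b) = S.l (F a) (F b)) ∧
      (∀ a b : Diword X, F (a.dR b) = S.r (F a) (F b)) ∧
      (∀ x : X, F (Diword.ofLetter x) = f x) := by
  refine ⟨diEval S f, ⟨diEval_dL S f, diEval_dR S f, diEval_ofLetter S f⟩, ?_⟩
  rintro G ⟨hL, hR, hx⟩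
  funext a
  obtain ⟨⟨u, m⟩, hu⟩ := a
  induction u generalizing m with
  | nil => exact absurd rfl hu.1
  | cons x t IH =>
    cases t with
    | nil =>
      obtain ⟨-, h1, h2⟩ := hu
      simp only [List.length_cons, List.length_nil] at h2
      have hm : m = 1 := by omega
      subst hm
      exact (hx x).trans (diEval_ofLetter S f x).symm
    | cons y t' =>
      obtain ⟨-, h1, h2⟩ := hu
      simp only [List.length_cons] at h2
      by_cases hm : m = 1
      · subst hm
        have hb : ((y :: t', 1) : List X × ℕ).1 ≠ [] ∧ 1 ≤ 1 ∧ 1 ≤ (y :: t').length := by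
          simp
        have heq : (⟨(x :: y :: t', 1), ⟨by simp, h1, by simpa using h2⟩⟩ : Diword X) =
            (Diword.ofLetter x).dR ⟨(y :: t', 1), hb⟩ := Subtype.ext rfl
        rw [heq, hR (Diword.ofLetter x) ⟨(y :: t', 1), hb⟩, hx, IH,
          diEval_dR S f (Diword.ofLetter x) ⟨(y :: t', 1), hb⟩, diEval_ofLetter]
      · have hb : ((y :: t', m - 1) : List X × ℕ).1 ≠ [] ∧ 1 ≤ m - 1 ∧
            m - 1 ≤ (y :: t').length := by
          refine ⟨by simp, by omega, by simp; omega⟩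
        have heq : (⟨(x :: y :: t', m), ⟨by simp, h1, by simpa using h2⟩⟩ : Diword X) =
            (Diword.ofLetter x).dL ⟨(y :: t', m - 1), hb⟩ := by
          apply Subtype.ext
          simp [Diword.dL, Diword.ofLetter]
          omega
        rw [heq, hL (Diword.ofLetter x) ⟨(y :: t', m - 1), hb⟩, hx, IH,
          diEval_dL S f (Diword.ofLetter x) ⟨(y :: t', m - 1), hb⟩, diEval_ofLetter]
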